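/- arXiv:0911.4665 — 2 statements merged into one kernel-verified Lean document; each statement's English description precedes it below -/
import Mathlib

section
/- Bounded β-volume is inherited under quasi-isometry with rescaled radius: let h : L' → L be a quasi-isometry with constants C₀ ≥ 1, D > 0 between complete Riemannian manifolds with bounded sectional curvature, and suppose every ball of radius C₀(β'+D) in L can be covered by at most n₁ balls of radius β := C₀⁻¹(β'−D) (assuming β' > D). If a subset B' ⊆ L' can be covered by k' open β'-balls, then h(B') can be covered by at most n₁·k' open β-balls in L. -/
/-- `S` can be covered by at most `m` open balls of radius `β`. -/
def CoveredBy {L : Type*} [MetricSpace L] (S : Set L) (β : ℝ) (m : ℕ) : Prop :=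
  ∃ s : Finset L, s.card ≤ m ∧ S ⊆ ⋃ y ∈ s, Metric.ball y β

/-- Bounded `β`-volume is inherited under quasi-isometry with rescaled radius: if
`h : L' → L` is a quasi-isometry with constants `C₀ ≥ 1`, `D > 0`, every ball of radius
`C₀(β'+D)` in `L` is covered by `n₁` balls of radius `β = C₀⁻¹(β'−D)` (with `β' > D`),
and `B' ⊆ L'` is covered by `k'` open `β'`-balls, then `h '' B'` is covered by at most
`n₁·k'` open `β`-balls. -/
theorem coveredBy_image_of_quasiIsometry {L L' : Type*} [MetricSpace L] [MetricSpace L']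
    (h : L' → L) (hbij : Function.Bijective h) (C₀ D β' : ℝ)
    (hC : 1 ≤ C₀) (hD : 0 < D) (hβ' : D < β')
    (hqi : ∀ x' y' : L', C₀⁻¹ * dist (h x') (h y') - D ≤ dist x' y' ∧
      dist x' y' ≤ C₀ * dist (h x') (h y') + D)
    (n₁ : ℕ)
    (hn₁ : ∀ x : L, CoveredBy (Metric.ball x (C₀ * (β' + D))) (C₀⁻¹ * (β' - D)) n₁)
    (B' : Set L') (k' : ℕ) (hB' : CoveredBy B' β' k') :
    CoveredBy (h '' B') (C₀⁻¹ * (β' - D)) (n₁ * k') := by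
  classical
  obtain ⟨s, hs, hcov⟩ := hB'
  choose t ht htcov using fun y : L' => hn₁ (h y)
  refine ⟨s.biUnion t, ?_, ?_⟩
  · calc (s.biUnion t).card ≤ ∑ y ∈ s, (t y).card := Finset.card_biUnion_le
      _ ≤ ∑ _y ∈ s, n₁ := Finset.sum_le_sum (fun y _ => ht y)
      _ = s.card * n₁ := by simp [Finset.sum_const, mul_comm]
      _ ≤ k' * n₁ := Nat.mul_le_mul_right _ hs
      _ = n₁ * k' := Nat.mul_comm _ _
  · rintro x ⟨x', hx', rfl⟩
    have := hcov hx'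
    simp only [Set.mem_iUnion] at this
    obtain ⟨y', hy', hxy⟩ := this
    have hC0 : 0 < C₀ := lt_of_lt_of_le one_pos hC
    have hmem : h x' ∈ Metric.ball (h y') (C₀ * (β' + D)) := by
      rw [Metric.mem_ball] at hxy ⊢
      have h1 := (hqi x' y').1
      have hinv : C₀ * C₀⁻¹ = 1 := mul_inv_cancel₀ (ne_of_gt hC0)
      nlinarith [dist_nonneg (x := h x') (y := h y')]
    have := htcov y' hmem
    simp only [Set.mem_iUnion] at this ⊢
    obtain ⟨z, hz, hmz⟩ := this
    exact ⟨z, Finset.mem_biUnion.mpr ⟨y', hy', hz⟩, hmz⟩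
end

section
/- Let (C_n) be a family of compact connected codimension-0 submanifolds-with-boundary of a (possibly noncompact) connected manifold L, whose boundaries B_n = ∂C_n are pairwise disjoint connected separating hypersurfaces, and suppose a fixed nonempty connected open set V ⊆ L is contained in every C_n, with V disjoint from every B_n. Then the sets C_n are nested: for any m, n, either C_n ⊆ C_m or C_m ⊆ C_n. -/
/-- Nesting of compact regions with disjoint connected separating boundaries: if the `C n`
are compact connected regions (closures of their interiors) in a connected noncompact
manifold `L`, with pairwise disjoint connected frontiers, and a fixed nonempty connected
open set `V` is contained in every `C n` and disjoint from every frontier, then the `C n`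
are nested. -/
theorem regions_nested {L : Type*} [TopologicalSpace L] [T2Space L]
    [ConnectedSpace L] (hnc : ¬ CompactSpace L)
    (C : ℕ → Set L) (hcl : ∀ n, IsClosed (C n)) (hcpt : ∀ n, IsCompact (C n))
    (hconn : ∀ n, IsConnected (C n)) (hreg : ∀ n, closure (interior (C n)) = C n)
    (hfr : ∀ n, IsConnected (frontier (C n)))
    (hdisj : ∀ m n, m ≠ n → Disjoint (frontier (C m)) (frontier (C n)))
    (V : Set L) (hV : V.Nonempty) (hVo : IsOpen V) (hVc : IsConnected V)
    (hVsub : ∀ n, V ⊆ C n) (hVfr : ∀ n, Disjoint V (frontier (C n))) :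
    ∀ m n, C n ⊆ C m ∨ C m ⊆ C n := by
  intro m n
  rcases eq_or_ne m n with rfl | hmn
  · exact Or.inl subset_rfl
  obtain ⟨v, hv⟩ := hV
  have hCsplit : ∀ a : ℕ, ∀ x, x ∈ C a → x ∈ interior (C a) ∨ x ∈ frontier (C a) := by
    intro a x hx
    by_cases h : x ∈ interior (C a)
    · exact Or.inl h
    · exact Or.inr ⟨by rwa [(hcl a).closure_eq], h⟩
  have hdisjIC : ∀ a : ℕ, Disjoint (interior (C a)) (C a)ᶜ :=
    fun a => Set.disjoint_compl_right_iff_subset.mpr interior_subset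
  -- key dichotomy: a connected set disjoint from frontier (C a) lies in the
  -- interior of `C a` or in its complement
  have key : ∀ a : ℕ, ∀ S : Set L, IsPreconnected S → Disjoint S (frontier (C a)) →
      S ⊆ interior (C a) ∨ S ⊆ (C a)ᶜ := by
    intro a S hS hd
    refine hS.subset_or_subset isOpen_interior (hcl a).isOpen_compl (hdisjIC a) ?_
    intro x hx
    by_cases hxC : x ∈ C a
    · rcases hCsplit a x hxC with h | h
      · exact Or.inl h
      · exact (hd.ne_of_mem hx h rfl).elim
    · exact Or.inr hxC
  have h1 := key m (frontier (C n)) (hfr n).isPreconnected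
    (hdisj m n hmn).symm
  have h2 := key n (frontier (C m)) (hfr m).isPreconnected (hdisj m n hmn)
  -- auxiliary: derive a contradiction from L being covered by compacts
  have habs : ∀ s : Set L, IsCompact s → s = Set.univ → False := by
    intro s hs hsu
    exact hnc ⟨hsu ▸ hs⟩
  rcases h1 with h1 | h1 <;> rcases h2 with h2 | h2
  · -- both frontiers in interiors: C m ∪ C n is clopen ⇒ L compact, absurd
    exfalso
    have heq : C m ∪ C n = interior (C m) ∪ interior (C n) := by
      apply Set.Subset.antisymm
      · rintro x (hx | hx)
        · rcases hCsplit m x hx with h | h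
          · exact Or.inl h
          · exact Or.inr (h2 h)
        · rcases hCsplit n x hx with h | h
          · exact Or.inr h
          · exact Or.inl (h1 h)
      · exact Set.union_subset_union interior_subset interior_subset
    have hclopen : IsClopen (C m ∪ C n) :=
      ⟨(hcl m).union (hcl n), heq ▸ isOpen_interior.union isOpen_interior⟩
    exact habs _ ((hcpt m).union (hcpt n))
      (hclopen.eq_univ ⟨v, Or.inl (hVsub m hv)⟩)
  · -- fr Cn ⊆ int Cm, fr Cm ∩ Cn = ∅ : C n ⊆ C m
    left
    have hcov : C n ⊆ interior (C m) ∪ (C m)ᶜ := by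
      intro x hx
      by_cases hxC : x ∈ C m
      · rcases hCsplit m x hxC with h | h
        · exact Or.inl h
        · exact absurd hx (h2 h)
      · exact Or.inr hxC
    rcases (hconn n).isPreconnected.subset_or_subset isOpen_interior
        (hcl m).isOpen_compl (hdisjIC m) hcov with h | h
    · exact h.trans interior_subset
    · exact absurd (hVsub m hv) (h (hVsub n hv))
  · -- symmetric: C m ⊆ C n
    right
    have hcov : C m ⊆ interior (C n) ∪ (C n)ᶜ := by
      intro x hx
      by_cases hxC : x ∈ C n
      · rcases hCsplit n x hxC with h | h
        · exact Or.inl h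
        · exact absurd hx (h1 h)
      · exact Or.inr hxC
    rcases (hconn m).isPreconnected.subset_or_subset isOpen_interior
        (hcl n).isOpen_compl (hdisjIC n) hcov with h | h
    · exact h.trans interior_subset
    · exact absurd (hVsub n hv) (h (hVsub m hv))
  · -- both frontiers outside: C m ∩ C n is clopen ⇒ L compact, absurd
    exfalso
    have heq : C m ∩ C n = interior (C m) ∩ interior (C n) := by
      apply Set.Subset.antisymm
      · rintro x ⟨hxm, hxn⟩
        refine ⟨?_, ?_⟩
        · rcases hCsplit m x hxm with h | h
          · exact h
          · exact absurd hxn (h2 h)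
        · rcases hCsplit n x hxn with h | h
          · exact h
          · exact absurd hxm (h1 h)
      · exact Set.inter_subset_inter interior_subset interior_subset
    have hclopen : IsClopen (C m ∩ C n) :=
      ⟨(hcl m).inter (hcl n), heq ▸ isOpen_interior.inter isOpen_interior⟩
    exact habs _ ((hcpt m).inter_right (hcl n))
      (hclopen.eq_univ ⟨v, hVsub m hv, hVsub n hv⟩)
end
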